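/- Let λ ≤ κ be infinite cardinals with λ regular, let H̄ be a κ-monoid and H ⊆ H̄ a λ⁻-submonoid such that H̄ is λ⁻-braided over H. Then for every λ⁻-homomorphism φ : H → K into a κ-monoid K, there exists a unique κ-homomorphism φ̄ : H̄ → K extending φ. -/

import Mathlib

open scoped Classical

universe u v w

/-- A κ-monoid (Definition 2.1 of the paper), with the index cardinal κ modelled
by an (infinite) index type `ι`.  `base` plays the role of the element `0 ∈ κ`. -/
structure KappaMonoid (ι : Type u) (H : Type v) where
  zero : H
  base : ι
  sum : (ι → H) → H
  /-- (A1) -/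
  sum_single : ∀ x : ι → H, (∀ i, i ≠ base → x i = zero) → sum x = x base
  /-- (A2) -/
  sum_flatten : ∀ (x : ι × ι → H) (π : ι × ι ≃ ι),
    sum (fun i => sum fun j => x (i, j)) = sum fun k => x (π.symm k)

namespace KappaMonoid

variable {ι : Type u} {H : Type v}

/-- The family with value `a` at `i`, `b` at `j`, and `0` elsewhere. -/
noncomputable def pairFam (M : KappaMonoid ι H) (i j : ι) (a b : H) : ι → H :=
  fun k => if k = i then a else if k = j then b else M.zero

/-- The induced binary addition `a + b` on a κ-monoid. -/
noncomputable def add [Nontrivial ι] (M : KappaMonoid ι H) (a b : H) : H :=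
  M.sum (M.pairFam M.base (Classical.choose (exists_ne M.base)) a b)

/-- `α·a`, where the cardinal `α` is realized as the cardinality of `s ⊆ ι`:
the κ-sum of the family equal to `a` on `s` and `0` elsewhere. -/
noncomputable def smulSet (M : KappaMonoid ι H) (s : Set ι) (a : H) : H :=
  M.sum fun i => if i ∈ s then a else M.zero

/-- The κ-sum of the subfamily of `x` supported on `s` (padding by `0`). -/
noncomputable def sumOn (M : KappaMonoid ι H) (s : Set ι) (x : ι → H) : H :=
  M.sum fun i => if i ∈ s then x i else M.zero

end KappaMonoid
/-- A limit element of the well-order (the minimum counts as a limit element). -/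
def IsLimitElt {ι : Type u} [Preorder ι] [SuccOrder ι] (μ : ι) : Prop :=
  ¬ ∃ ν, ν < μ ∧ Order.succ ν = μ

/-- An indexed partition of the index set `ι` (blocks may be empty). -/
def IsIndexedPartition {ι : Type u} (I : ι → Set ι) : Prop :=
  (∀ μ ν, μ ≠ ν → Disjoint (I μ) (I ν)) ∧ (⋃ μ, I μ) = Set.univ

namespace KappaMonoid
variable {ι : Type u} {H : Type v}

/-- Definition 3.1(1): the families `x` and `y`, with entries in the λ⁻-submonoid
`X ⊆ H`, are λ⁻-braided: there are indexed partitions `(I_μ)`, `(J_μ)` of `ι` with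
blocks of cardinality `< λ` and braiding families `(u_μ)`, `(v_μ)` in `X` with
`v_μ = 0` at limit elements, such that `Σ_{i∈I_μ} x_i = v_μ + u_μ` and
`Σ_{j∈J_μ} y_j = v_{μ+1} + u_μ` for all `μ`. -/
noncomputable def Braided [Infinite ι] [LinearOrder ι] [SuccOrder ι]
    (M : KappaMonoid ι H) (lam : Cardinal.{u}) (X : Set H) (x y : ι → H) : Prop :=
  ∃ (I J : ι → Set ι) (u v : ι → H),
    IsIndexedPartition I ∧ IsIndexedPartition J ∧
    (∀ μ, Cardinal.mk (I μ) < lam) ∧ (∀ μ, Cardinal.mk (J μ) < lam) ∧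
    (∀ μ, u μ ∈ X) ∧ (∀ μ, v μ ∈ X) ∧
    (∀ μ, IsLimitElt μ → v μ = M.zero) ∧
    (∀ μ, M.sumOn (I μ) x = M.add (v μ) (u μ)) ∧
    (∀ μ, M.sumOn (J μ) y = M.add (v (Order.succ μ)) (u μ))

/-- `X` is a λ⁻-submonoid of the κ-monoid `H`: it contains `0` and is closed under
sums of families with support of cardinality `< λ`. -/
def IsSubmonoidLT (M : KappaMonoid ι H) (lam : Cardinal.{u}) (X : Set H) : Prop :=
  M.zero ∈ X ∧ ∀ x : ι → H, (∀ i, x i ∈ X) →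
    Cardinal.mk {i | x i ≠ M.zero} < lam → M.sum x ∈ X

/-- Definition 3.1(2): the κ-monoid `H` is λ⁻-braided over `X`: `X` generates `H`
as a κ-monoid, and any two κ-indexed families in `X` with equal κ-sums are
λ⁻-braided. -/
noncomputable def BraidedOver [Infinite ι] [LinearOrder ι] [SuccOrder ι]
    (M : KappaMonoid ι H) (lam : Cardinal.{u}) (X : Set H) : Prop :=
  (∀ h : H, ∃ x : ι → H, (∀ i, x i ∈ X) ∧ M.sum x = h) ∧
  ∀ x y : ι → H, (∀ i, x i ∈ X) → (∀ i, y i ∈ X) →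
    M.sum x = M.sum y → M.Braided lam X x y

end KappaMonoid
/-- A κ-homomorphism: a map preserving the neutral element and κ-indexed sums. -/
def IsKappaHom {ι : Type u} {H : Type v} {K : Type w}
    (M : KappaMonoid ι H) (N : KappaMonoid ι K) (φ : H → K) : Prop :=
  φ M.zero = N.zero ∧ ∀ x : ι → H, φ (M.sum x) = N.sum fun i => φ (x i)

/-- A λ⁻-homomorphism on the λ⁻-submonoid `X`: it preserves `0` and all sums of
families in `X` with support of cardinality `< λ`. -/
def IsLTHomOn {ι : Type u} {H : Type v} {K : Type w}
    (M : KappaMonoid ι H) (N : KappaMonoid ι K) (lam : Cardinal.{u}) (X : Set H)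
    (φ : H → K) : Prop :=
  φ M.zero = N.zero ∧ ∀ x : ι → H, (∀ i, x i ∈ X) →
    Cardinal.mk {i | x i ≠ M.zero} < lam → φ (M.sum x) = N.sum fun i => φ (x i)


section Aux

variable {ι : Type u} {H : Type v} {K : Type w}

lemma mk_prod_self (ι : Type u) [Infinite ι] : Cardinal.mk (ι × ι) = Cardinal.mk ι := by
  simp [Cardinal.mk_prod, Cardinal.lift_id, Cardinal.mul_eq_self (Cardinal.aleph0_le_mk ι)]

lemma mk_compl_ge {α : Type u} {S : Set α} (g : ι → α) (hg : Function.Injective g)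
    (hmem : ∀ ν, g ν ∉ S) : Cardinal.mk ι ≤ Cardinal.mk ↥Sᶜ :=
  Cardinal.mk_le_of_injective (f := fun ν => (⟨g ν, hmem ν⟩ : ↥Sᶜ))
    (fun a b h => hg (congrArg Subtype.val h))

/-- A complement in `ι` admitting an injection from `ι` has full cardinality. -/
lemma mk_compl_eq_self [Infinite ι] {S : Set ι} (g : ι → ι) (hg : Function.Injective g)
    (hmem : ∀ ν, g ν ∉ S) : Cardinal.mk ↥Sᶜ = Cardinal.mk ι :=
  le_antisymm (Cardinal.mk_set_le _) (mk_compl_ge g hg hmem)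

/-- A complement in `ι × ι` admitting an injection from `ι` has cardinality `#ι`. -/
lemma mk_compl_prod_eq_self [Infinite ι] {S : Set (ι × ι)} (g : ι → ι × ι)
    (hg : Function.Injective g) (hmem : ∀ ν, g ν ∉ S) :
    Cardinal.mk ↥Sᶜ = Cardinal.mk ι :=
  le_antisymm ((Cardinal.mk_set_le _).trans_eq (mk_prod_self ι)) (mk_compl_ge g hg hmem)

namespace KappaMonoid

lemma sum_congr (M : KappaMonoid ι H) {x y : ι → H} (h : ∀ i, x i = y i) :
    M.sum x = M.sum y := congrArg M.sum (funext h)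

lemma sum_zero (M : KappaMonoid ι H) : M.sum (fun _ => M.zero) = M.zero :=
  M.sum_single _ (fun _ _ => rfl)

/-- The master rearrangement lemma, derived from (A1) and (A2): a doubly-indexed
family supported on `A` can be re-indexed along any map injective on `A`, provided
both `A` and the image have complements of full cardinality. -/
lemma master (M : KappaMonoid ι H) [Infinite ι] (z : ι × ι → H) (w : ι → H)
    (f : ι × ι → ι) (A : Set (ι × ι))
    (hf : Set.InjOn f A) (hz : ∀ p, p ∉ A → z p = M.zero)
    (hw : ∀ p ∈ A, w (f p) = z p) (hw0 : ∀ k, k ∉ f '' A → w k = M.zero)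
    (hcA : Cardinal.mk ↥Aᶜ = Cardinal.mk ι)
    (hcB : Cardinal.mk ↥(f '' A)ᶜ = Cardinal.mk ι) :
    M.sum (fun i => M.sum fun j => z (i, j)) = M.sum w := by
  classical
  -- the bijection induced by `f` between `A` and its image
  have hinj : Function.Injective (fun a : A => (⟨f a, ⟨a.1, a.2, rfl⟩⟩ : ↥(f '' A))) := by
    intro a b hab
    exact Subtype.ext (hf a.2 b.2 (congrArg Subtype.val hab))
  have hsurj : Function.Surjective (fun a : A => (⟨f a, ⟨a.1, a.2, rfl⟩⟩ : ↥(f '' A))) := by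
    rintro ⟨k, p, hp, rfl⟩
    exact ⟨⟨p, hp⟩, rfl⟩
  let e : ↥A ≃ ↥(f '' A) := Equiv.ofBijective _ ⟨hinj, hsurj⟩
  have he : ∀ a : ↥A, (e a : ι) = f a := fun a => rfl
  obtain ⟨e'⟩ : Nonempty (↥Aᶜ ≃ ↥(f '' A)ᶜ) := Cardinal.eq.1 (hcA.trans hcB.symm)
  let π : (ι × ι) ≃ ι :=
    (Equiv.Set.sumCompl A).symm.trans ((e.sumCongr e').trans (Equiv.Set.sumCompl (f '' A)))
  have hπ : ∀ k : ι, z (π.symm k) = w k := by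
    intro k
    by_cases hk : k ∈ f '' A
    · have h1 : π.symm k = ((e.symm ⟨k, hk⟩ : ↥A) : ι × ι) := by
        show (Equiv.Set.sumCompl A) ((e.sumCongr e').symm ((Equiv.Set.sumCompl (f '' A)).symm k)) = _
        have hx : ((Equiv.Set.sumCompl (f '' A)).symm ((⟨k, hk⟩ : ↥(f '' A)) : ι)) =
            Sum.inl ⟨k, hk⟩ := Equiv.Set.sumCompl_symm_apply _
        rw [show ((Equiv.Set.sumCompl (f '' A)).symm k) = Sum.inl ⟨k, hk⟩ from hx]
        rfl
      rw [h1, ← hw _ (e.symm ⟨k, hk⟩).2]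
      congr 1
      have := he (e.symm ⟨k, hk⟩)
      rw [Equiv.apply_symm_apply] at this
      exact this.symm
    · have h1 : π.symm k = ((e'.symm ⟨k, hk⟩ : ↥Aᶜ) : ι × ι) := by
        show (Equiv.Set.sumCompl A) ((e.sumCongr e').symm ((Equiv.Set.sumCompl (f '' A)).symm k)) = _
        rw [Equiv.Set.sumCompl_symm_apply_of_notMem hk]
        rfl
      rw [h1, hz _ (e'.symm ⟨k, hk⟩).2, hw0 _ hk]
  rw [M.sum_flatten z π]
  exact M.sum_congr hπ

end KappaMonoid

end Aux

namespace KappaMonoid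

variable {ι : Type u} {H : Type v} {K : Type w}

lemma mk_compl_small [Infinite ι] {S : Set ι} (hS : S.Finite) :
    Cardinal.mk ↥Sᶜ = Cardinal.mk ι :=
  Cardinal.mk_compl_of_infinite S (hS.lt_aleph0.trans_le (Cardinal.aleph0_le_mk ι))

lemma mk_compl_prod_small [Infinite ι] {S : Set (ι × ι)} (hS : S.Finite) :
    Cardinal.mk ↥Sᶜ = Cardinal.mk ι :=
  (Cardinal.mk_compl_of_infinite S
    (hS.lt_aleph0.trans_le (Cardinal.aleph0_le_mk _))).trans (mk_prod_self ι)

/-- The κ-sum of a family supported at a single (arbitrary) index. -/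
lemma sum_singleFam (M : KappaMonoid ι H) [Infinite ι] (i₀ : ι) (a : H) :
    M.sum (fun i => if i = i₀ then a else M.zero) = a := by
  classical
  have this := M.master (fun q => if q = (M.base, M.base) then a else M.zero)
      (fun i => if i = i₀ then a else M.zero) (fun _ => i₀) {(M.base, M.base)}
      (fun p hp q hq _ => hp.trans hq.symm)
      (by intro p hp
          show (if p = (M.base, M.base) then a else M.zero) = M.zero
          rw [if_neg (by simpa using hp)])
      (by intro p hp; rw [Set.mem_singleton_iff] at hp; subst hp; simp)
      (by intro k hk
          have hki : k ≠ i₀ := fun h => hk ⟨(M.base, M.base), rfl, h.symm⟩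
          show (if k = i₀ then a else M.zero) = M.zero
          rw [if_neg hki])
      (mk_compl_prod_small (Set.finite_singleton _))
      (mk_compl_small ((Set.finite_singleton i₀).subset (by
        rintro k ⟨p, -, rfl⟩; exact rfl)))
  have hrow : (fun i => M.sum fun j =>
      (if ((i, j) : ι × ι) = (M.base, M.base) then a else M.zero))
      = fun i => if i = M.base then a else M.zero := by
    funext i
    by_cases hi : i = M.base
    · subst hi
      rw [M.sum_single _ (fun j hj => if_neg (by simp [hj]))]
      simp
    · rw [M.sum_single _ (fun j hj => if_neg (by simp [hi]))]
      simp [hi]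
  rw [← this, hrow, M.sum_single _ (fun i hi => if_neg hi), if_pos rfl]

/-- The κ-sum of any family supported at a single index, instance-agnostic form. -/
lemma sum_eq_single' (M : KappaMonoid ι H) [Infinite ι] (i₀ : ι) (a : H) (w : ι → H)
    (hw₀ : w i₀ = a) (hw : ∀ i, i ≠ i₀ → w i = M.zero) : M.sum w = a := by
  classical
  have h : ∀ i, w i = if i = i₀ then a else M.zero := by
    intro i
    by_cases hi : i = i₀
    · rw [if_pos hi, hi, hw₀]
    · rw [if_neg hi, hw i hi]
  rw [M.sum_congr h, M.sum_singleFam]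

/-- Summing blockwise over an indexed partition agrees with the total κ-sum. -/
lemma sum_partition (M : KappaMonoid ι H) [Infinite ι] {I : ι → Set ι}
    (hI : IsIndexedPartition I) (x : ι → H) :
    M.sum (fun μ => M.sumOn (I μ) x) = M.sum x := by
  classical
  -- a fixed injection `g : ι → ι` whose range has full-size complement
  obtain ⟨p⟩ : Nonempty (ι × ι ≃ ι) := Cardinal.eq.1 (mk_prod_self ι)
  obtain ⟨c₀, c₁, hcc⟩ := exists_pair_ne ι
  set g : ι → ι := fun ν => p (ν, c₀) with hg
  have hginj : Function.Injective g := fun a b h => congrArg Prod.fst (p.injective h)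
  have hgc : Cardinal.mk ↥(Set.range g)ᶜ = Cardinal.mk ι := by
    refine mk_compl_eq_self (fun ν => p (ν, c₁)) (fun a b h => congrArg Prod.fst (p.injective h)) ?_
    rintro ν ⟨μ, hμ⟩
    exact hcc (congrArg Prod.snd (p.injective hμ))
  -- the common padded relabeling of `x` along `g`
  set w : ι → H := fun k => if h : ∃ ν, g ν = k then x h.choose else M.zero with hw
  have hwg : ∀ ν, w (g ν) = x ν := by
    intro ν
    have hex : ∃ μ, g μ = g ν := ⟨ν, rfl⟩
    rw [hw]
    simp only [dif_pos hex]
    exact congrArg x (hginj hex.choose_spec)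
  have hwo : ∀ k, k ∉ Set.range g → w k = M.zero := by
    intro k hk
    rw [hw]; exact dif_neg (fun ⟨ν, hν⟩ => hk ⟨ν, hν⟩)
  -- for each `ν`, the block containing it
  have hcover : ∀ ν : ι, ∃ μ, ν ∈ I μ := by
    intro ν
    have := hI.2 ▸ Set.mem_univ ν
    simpa [Set.mem_iUnion] using (hI.2.symm ▸ Set.mem_univ ν : ν ∈ ⋃ μ, I μ)
  -- Step 1 : `M.sum x = M.sum w`
  obtain ⟨c, hcb⟩ := exists_ne M.base
  have h1 : M.sum x = M.sum w := by
    have := M.master (fun q => if q.1 = M.base then x q.2 else M.zero) w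
        (fun q => g q.2) {q : ι × ι | q.1 = M.base}
        (by intro q hq q' hq' h
            have h2 : q.2 = q'.2 := hginj h
            exact Prod.ext (hq.trans hq'.symm) h2)
        (by intro q hq; exact if_neg hq)
        (by intro q hq
            show w (g q.2) = if q.1 = M.base then x q.2 else M.zero
            rw [if_pos (show q.1 = M.base from hq)]; exact hwg q.2)
        (by intro k hk
            refine hwo k (fun ⟨ν, hν⟩ => hk ⟨(M.base, ν), rfl, hν⟩))
        (mk_compl_prod_eq_self (fun ν => (c, ν))
          (fun a b h => (Prod.mk.injEq _ _ _ _ ▸ h).2)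
          (by intro ν h; exact hcb h))
        (by refine hgc.symm ▸ ?_ -- image = range g
            have : (fun q : ι × ι => g q.2) '' {q : ι × ι | q.1 = M.base} = Set.range g := by
              ext k
              constructor
              · rintro ⟨q, -, rfl⟩; exact ⟨q.2, rfl⟩
              · rintro ⟨ν, hν⟩; exact ⟨(M.base, ν), rfl, hν⟩
            rw [this])
    rw [← this]
    have hrow : (fun i => M.sum fun j => if ((i, j) : ι × ι).1 = M.base then x j else M.zero)
        = fun i => if i = M.base then M.sum x else M.zero := by
      funext i
      by_cases hi : i = M.base
      · simp [hi]
      · rw [if_neg hi]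
        have : (fun j => if i = M.base then x j else M.zero) = fun _ => M.zero := by
          funext j; exact if_neg hi
        rw [this, M.sum_zero]
    rw [hrow, M.sum_single _ (fun i hi => if_neg hi), if_pos rfl]
  -- Step 2 : blockwise sum equals `M.sum w`
  have h2 : M.sum (fun μ => M.sumOn (I μ) x) = M.sum w := by
    refine M.master (fun q => if q.2 ∈ I q.1 then x q.2 else M.zero) w
        (fun q => g q.2) {q : ι × ι | q.2 ∈ I q.1}
        ?_ (by intro q hq; exact if_neg hq)
        (by intro q hq
            show w (g q.2) = if q.2 ∈ I q.1 then x q.2 else M.zero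
            rw [if_pos (show q.2 ∈ I q.1 from hq)]; exact hwg q.2)
        ?_ ?_ ?_
    · intro q hq q' hq' h
      have h2 : q.2 = q'.2 := hginj h
      refine Prod.ext ?_ h2
      by_contra hne
      exact Set.disjoint_left.1 (hI.1 _ _ hne) hq (h2.symm ▸ hq')
    · intro k hk
      refine hwo k (fun ⟨ν, hν⟩ => ?_)
      obtain ⟨μ, hμ⟩ := hcover ν
      exact hk ⟨(μ, ν), hμ, hν⟩
    · -- complement of the partition graph is large
      have hσ : ∀ ν : ι, ∃ μ, ν ∉ I μ := by
        intro ν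
        obtain ⟨μ, hμ⟩ := hcover ν
        obtain ⟨μ', hμ'⟩ := exists_ne μ
        exact ⟨μ', fun hb => Set.disjoint_left.1 (hI.1 _ _ hμ') hb hμ⟩
      choose σ hσ using hσ
      exact mk_compl_prod_eq_self (fun ν => (σ ν, ν))
        (fun a b h => (Prod.mk.injEq _ _ _ _ ▸ h).2) hσ
    · refine hgc.symm ▸ ?_
      have : (fun q : ι × ι => g q.2) '' {q : ι × ι | q.2 ∈ I q.1} = Set.range g := by
        ext k
        constructor
        · rintro ⟨q, -, rfl⟩; exact ⟨q.2, rfl⟩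
        · rintro ⟨ν, hν⟩
          obtain ⟨μ, hμ⟩ := hcover ν
          exact ⟨(μ, ν), hμ, hν⟩
      rw [this]
  rw [h2, h1]

end KappaMonoid

namespace KappaMonoid

variable {ι : Type u} {K : Type w}

/-- The telescoping step: shifting the braiding family `V` by the successor map
does not change the κ-sum of the rows `V μ + U μ`, provided `V` vanishes away
from the range of `succ`. -/
lemma telescope (N : KappaMonoid ι K) [Infinite ι] [LinearOrder ι] [SuccOrder ι]
    [NoMaxOrder ι] (s t : ι) (hst : s ≠ t) (V U : ι → K)
    (hV : ∀ ν, ν ∉ Set.range (Order.succ : ι → ι) → V ν = N.zero) :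
    N.sum (fun μ => N.sum (N.pairFam s t (V μ) (U μ))) =
      N.sum (fun μ => N.sum (N.pairFam s t (V (Order.succ μ)) (U μ))) := by
  classical
  obtain ⟨p⟩ : Nonempty (ι × ι ≃ ι) := Cardinal.eq.1 (mk_prod_self ι)
  obtain ⟨r, hr⟩ := (Set.toFinite ({s, t} : Set ι)).infinite_compl.nonempty
  have hrs : r ≠ s := fun h => hr (by rw [h]; exact Set.mem_insert _ _)
  have hrt : r ≠ t := fun h => hr (by rw [h]; exact Set.mem_insert_of_mem _ rfl)
  set W : ι × ι → K := fun q => N.pairFam s t (V q.1) (U q.1) q.2 with hW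
  set T : ι → K := fun k => W (p.symm k) with hT
  have h1 : N.sum (fun μ => N.sum (N.pairFam s t (V μ) (U μ))) = N.sum T :=
    N.sum_flatten W p
  -- second flattening, along a twisted injection
  have h2 : N.sum (fun μ => N.sum (N.pairFam s t (V (Order.succ μ)) (U μ))) = N.sum T := by
    refine N.master (fun q => N.pairFam s t (V (Order.succ q.1)) (U q.1) q.2) T
        (fun q => if q.2 = s then p (Order.succ q.1, s) else p (q.1, t))
        {q : ι × ι | q.2 = s ∨ q.2 = t} ?_ ?_ ?_ ?_ ?_ ?_
    · -- injectivity on A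
      intro q hq q' hq' h
      simp only at h
      by_cases h1 : q.2 = s <;> by_cases h2 : q'.2 = s
      · rw [if_pos h1, if_pos h2] at h
        have := p.injective h
        exact Prod.ext (Order.succ_injective (congrArg Prod.fst this)) (h1.trans h2.symm)
      · rw [if_pos h1, if_neg h2] at h
        exact absurd (congrArg Prod.snd (p.injective h)) hst
      · rw [if_neg h1, if_pos h2] at h
        exact absurd (congrArg Prod.snd (p.injective h)).symm hst
      · rw [if_neg h1, if_neg h2] at h
        have := p.injective h
        have ht1 : q.2 = t := hq.resolve_left h1
        have ht2 : q'.2 = t := hq'.resolve_left h2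
        exact Prod.ext ((Prod.mk.injEq _ _ _ _ ▸ this).1) (ht1.trans ht2.symm)
    · -- z vanishes off A
      intro q hq
      have hq' : q.2 ≠ s ∧ q.2 ≠ t := by simpa [Set.mem_setOf_eq, not_or] using hq
      show N.pairFam s t _ _ q.2 = N.zero
      rw [pairFam, if_neg hq'.1, if_neg hq'.2]
    · -- compatibility with T
      intro q hq
      by_cases h1 : q.2 = s
      · show T (if q.2 = s then p (Order.succ q.1, s) else p (q.1, t)) = _
        rw [if_pos h1, hT]
        simp only [Equiv.symm_apply_apply, hW]
        show N.pairFam s t (V (Order.succ q.1)) (U (Order.succ q.1)) s = _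
        rw [pairFam, if_pos rfl, h1, pairFam, if_pos rfl]
      · have ht1 : q.2 = t := hq.resolve_left h1
        show T (if q.2 = s then p (Order.succ q.1, s) else p (q.1, t)) = _
        rw [if_neg h1, hT]
        simp only [Equiv.symm_apply_apply, hW]
        show N.pairFam s t (V q.1) (U q.1) t = _
        rw [pairFam, if_neg (Ne.symm hst), if_pos rfl, ht1, pairFam,
          if_neg (Ne.symm hst), if_pos rfl]
    · -- T vanishes off the image
      intro k hk
      set q : ι × ι := p.symm k with hq
      have hkq : k = p q := (p.apply_symm_apply k).symm
      show W (p.symm k) = N.zero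
      rw [← hq]
      by_cases h1 : q.2 = s
      · show N.pairFam s t (V q.1) (U q.1) q.2 = N.zero
        rw [h1, pairFam, if_pos rfl]
        refine hV q.1 (fun ⟨μ, hμ⟩ => hk ⟨(μ, s), Or.inl rfl, ?_⟩)
        show (if s = s then p (Order.succ μ, s) else _) = k
        rw [if_pos rfl, hμ, hkq, ← h1]
      · by_cases h2 : q.2 = t
        · exact absurd ⟨(q.1, t), Or.inr rfl, by
            show (if t = s then _ else p (q.1, t)) = k
            rw [if_neg (Ne.symm hst)]
            rw [hkq, ← h2]⟩ hk
        · show N.pairFam s t (V q.1) (U q.1) q.2 = N.zero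
          rw [pairFam, if_neg h1, if_neg h2]
    · -- complement of A is large
      exact mk_compl_prod_eq_self (fun ν => (ν, r))
        (fun a b h => (Prod.mk.injEq _ _ _ _ ▸ h).1)
        (by intro ν h
            rcases h with h | h
            exacts [hrs h, hrt h])
    · -- complement of the image is large
      refine mk_compl_eq_self (fun ν => p (ν, r))
        (fun a b h => congrArg Prod.fst (p.injective h)) ?_
      rintro ν ⟨q, -, hq⟩
      simp only at hq
      by_cases h1 : q.2 = s
      · rw [if_pos h1] at hq
        exact hrs (congrArg Prod.snd (p.injective hq.symm))
      · rw [if_neg h1] at hq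
        exact hrt (congrArg Prod.snd (p.injective hq.symm))
  rw [h1, h2]

end KappaMonoid

/-- Proposition 3.9: if the κ-monoid `H̄` is λ⁻-braided over the λ⁻-submonoid `X`,
then every λ⁻-homomorphism `φ` from `X` into a κ-monoid `K` extends uniquely to a
κ-homomorphism `H̄ → K`. -/
theorem braidedOver_extend_hom {ι : Type u} {H : Type v} {K : Type w} [Infinite ι]
    [LinearOrder ι] [SuccOrder ι] [NoMaxOrder ι] [WellFoundedLT ι]
    (M : KappaMonoid ι H) (lam : Cardinal.{u}) (hreg : lam.IsRegular)
    (hlam : lam ≤ Cardinal.mk ι)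
    (X : Set H) (hX : M.IsSubmonoidLT lam X) (hbo : M.BraidedOver lam X)
    (N : KappaMonoid ι K) (φ : H → K) (hφ : IsLTHomOn M N lam X φ) :
    ∃! ψ : H → K, IsKappaHom M N ψ ∧ ∀ h ∈ X, ψ h = φ h := by
  classical
  obtain ⟨p⟩ : Nonempty (ι × ι ≃ ι) := Cardinal.eq.1 (mk_prod_self ι)
  have hφ0 : φ M.zero = N.zero := hφ.1
  have hal : Cardinal.aleph0 ≤ lam := hreg.aleph0_le
  -- φ intertwines small block sums
  have hsumOn : ∀ (S : Set ι) (x : ι → H), (∀ i, x i ∈ X) → Cardinal.mk ↥S < lam →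
      φ (M.sumOn S x) = N.sumOn S (fun i => φ (x i)) := by
    intro S x hx hS
    have hsub : {i | (if i ∈ S then x i else M.zero) ≠ M.zero} ⊆ S := by
      intro i hi
      by_contra h
      exact hi (if_neg h)
    have h1 := hφ.2 (fun i => if i ∈ S then x i else M.zero)
      (fun i => by by_cases h : i ∈ S
                   · simpa [h] using hx i
                   · simpa [h] using hX.1)
      (lt_of_le_of_lt (Cardinal.mk_le_mk_of_subset hsub) hS)
    show φ (M.sum fun i => if i ∈ S then x i else M.zero) = _
    rw [h1]
    refine N.sum_congr (fun i => ?_)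
    by_cases h : i ∈ S
    · simp [h]
    · simp [h, hφ0]
  -- φ intertwines binary sums of elements of X
  set c : ι := Classical.choose (exists_ne M.base) with hcdef
  have hcb : c ≠ M.base := Classical.choose_spec (exists_ne M.base)
  have haddφ : ∀ a b : H, a ∈ X → b ∈ X →
      φ (M.add a b) = N.sum (N.pairFam M.base c (φ a) (φ b)) := by
    intro a b ha hb
    have hsub : {i | M.pairFam M.base c a b i ≠ M.zero} ⊆ {M.base, c} := by
      intro i hi
      by_contra h
      simp only [Set.mem_insert_iff, Set.mem_singleton_iff, not_or] at h
      exact hi (by rw [KappaMonoid.pairFam, if_neg h.1, if_neg h.2])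
    have h1 := hφ.2 (M.pairFam M.base c a b)
      (fun i => by
        by_cases h1 : i = M.base
        · simpa [KappaMonoid.pairFam, h1] using ha
        · by_cases h2 : i = c
          · simpa [KappaMonoid.pairFam, h1, h2, hcb] using hb
          · simpa [KappaMonoid.pairFam, h1, h2] using hX.1)
      (lt_of_le_of_lt (Cardinal.mk_le_mk_of_subset hsub)
        ((Set.toFinite _).lt_aleph0.trans_le hal))
    show φ (M.sum (M.pairFam M.base c a b)) = _
    rw [h1]
    refine N.sum_congr (fun i => ?_)
    by_cases h1 : i = M.base
    · simp [KappaMonoid.pairFam, h1]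
    · by_cases h2 : i = c
      · simp [KappaMonoid.pairFam, h1, h2, hcb]
      · simp [KappaMonoid.pairFam, h1, h2, hφ0]
  -- the key well-definedness property, via the braiding
  have key : ∀ x y : ι → H, (∀ i, x i ∈ X) → (∀ i, y i ∈ X) → M.sum x = M.sum y →
      N.sum (fun i => φ (x i)) = N.sum (fun i => φ (y i)) := by
    intro x y hx hy hxy
    obtain ⟨I, J, u, v, hIp, hJp, hIc, hJc, hu, hv, hvlim, hxI, hyJ⟩ :=
      hbo.2 x y hx hy hxy
    calc N.sum (fun i => φ (x i))
        = N.sum (fun μ => N.sumOn (I μ) (fun i => φ (x i))) :=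
          (N.sum_partition hIp _).symm
      _ = N.sum (fun μ => N.sum (N.pairFam M.base c (φ (v μ)) (φ (u μ)))) := by
          refine N.sum_congr (fun μ => ?_)
          rw [← hsumOn (I μ) x hx (hIc μ), hxI μ, haddφ _ _ (hv μ) (hu μ)]
      _ = N.sum (fun μ => N.sum (N.pairFam M.base c (φ (v (Order.succ μ))) (φ (u μ)))) := by
          refine N.telescope M.base c (Ne.symm hcb) (fun μ => φ (v μ)) (fun μ => φ (u μ))
            (fun ν hν => ?_)
          show φ (v ν) = N.zero
          rw [hvlim ν (fun ⟨μ, _, hμ⟩ => hν ⟨μ, hμ⟩), hφ0]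
      _ = N.sum (fun μ => N.sumOn (J μ) (fun i => φ (y i))) := by
          refine N.sum_congr (fun μ => ?_)
          rw [← haddφ _ _ (hv _) (hu μ), ← hyJ μ, hsumOn (J μ) y hy (hJc μ)]
      _ = N.sum (fun i => φ (y i)) := N.sum_partition hJp _
  -- representatives of elements of H as κ-sums from X
  choose rep hrepX hrepsum using hbo.1
  have hext : ∀ h ∈ X, N.sum (fun i => φ (rep h i)) = φ h := by
    intro h hh
    have hsingle : M.sum (fun i => if i = M.base then h else M.zero) = h := by
      rw [M.sum_single _ (fun i hi => if_neg hi), if_pos rfl]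
    have h2 := key (rep h) (fun i => if i = M.base then h else M.zero) (hrepX h)
      (fun i => by
        by_cases hib : i = M.base
        · simpa [hib] using hh
        · simpa [hib] using hX.1)
      (by rw [hrepsum h, hsingle])
    calc N.sum (fun i => φ (rep h i))
        = N.sum (fun i => φ (if i = M.base then h else M.zero)) := h2
      _ = φ h := N.sum_eq_single' M.base (φ h) _ (by simp)
          (fun i hi => by simp [hi, hφ0])
  refine ⟨fun h => N.sum (fun i => φ (rep h i)), ⟨⟨?_, ?_⟩, hext⟩, ?_⟩
  · -- preserves zero
    show N.sum (fun i => φ (rep M.zero i)) = N.zero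
    rw [hext M.zero hX.1, hφ0]
  · -- preserves κ-sums
    intro x
    have hsum1 : M.sum x = M.sum (fun k => rep (x (p.symm k).1) (p.symm k).2) := by
      have h0 : M.sum x = M.sum (fun i => M.sum (fun j => rep (x i) j)) :=
        M.sum_congr (fun i => (hrepsum (x i)).symm)
      rw [h0, M.sum_flatten (fun q => rep (x q.1) q.2) p]
    have h2 := key (rep (M.sum x)) (fun k => rep (x (p.symm k).1) (p.symm k).2)
      (hrepX _) (fun k => hrepX _ _) (by rw [hrepsum, ← hsum1])
    show N.sum (fun i => φ (rep (M.sum x) i)) =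
        N.sum (fun i => N.sum (fun j => φ (rep (x i) j)))
    calc N.sum (fun i => φ (rep (M.sum x) i))
        = N.sum (fun k => φ (rep (x (p.symm k).1) (p.symm k).2)) := h2
      _ = N.sum (fun i => N.sum (fun j => φ (rep (x i) j))) :=
          (N.sum_flatten (fun q => φ (rep (x q.1) q.2)) p).symm
  · -- uniqueness
    intro ψ' hψ'
    obtain ⟨⟨hz', hs'⟩, hext'⟩ := hψ'
    funext h
    have h1 : ψ' h = N.sum (fun i => φ (rep h i)) := by
      conv_lhs => rw [← hrepsum h]
      rw [hs' (rep h)]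
      exact N.sum_congr (fun i => hext' _ (hrepX h i))
    exact h1
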